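/- Let p be a prime, 1 ≤ k ≤ p−1 with (k+1)(k+2) < p, and A = (a_i)_{i≥0} the sequence over F_p with a_i = binom(i+k, k) mod p. Then the p-th expansion complexity satisfies E_p(A) = k + 2. -/

import Mathlib

/-- The `N`-th linear complexity of a sequence `s` over a field: the length of a
shortest linear recurrence satisfied by the first `N` terms. -/
noncomputable def linComplexityN {F : Type*} [Field F] (s : ℕ → F) (N : ℕ) : ℕ :=
  sInf {L | ∃ c : Fin L → F, ∀ i, i + L < N →
    s (i + L) + ∑ ℓ : Fin L, c ℓ * s (i + ℓ.1) = 0}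

open Classical in
/-- The `N`-th expansion complexity of a sequence `s` over a field: `0` if the first
`N` terms vanish, otherwise the least total degree of a nonzero bivariate polynomial
`h(x,y)` with `h(x, G(x)) ≡ 0 mod x^N`, where `G` is the generating function of `s`. -/
noncomputable def expComplexityN {F : Type*} [Field F] (s : ℕ → F) (N : ℕ) : ℕ :=
  if ∀ i < N, s i = 0 then 0 else
  sInf {d | ∃ h : MvPolynomial (Fin 2) F, h ≠ 0 ∧ h.totalDegree = d ∧
    (PowerSeries.X : PowerSeries F) ^ N ∣
      MvPolynomial.aeval ![(PowerSeries.X : PowerSeries F), PowerSeries.mk s] h}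

open Polynomial in
lemma auxA {F : Type*} [Field F] (u : Polynomial F) (hu : u ≠ 0) :
  ∀ (n : ℕ) (c : ℕ → Polynomial F),
  (∀ b, 1 ≤ b → b ≤ n → (c b).natDegree < u.natDegree) →
  (∑ b ∈ Finset.range (n+1), c b * u ^ (n - b)) = 0 →
  ∀ b ≤ n, c b = 0 := by
  intro n
  induction n with
  | zero =>
    intro c _ hsum b hb
    interval_cases b
    simpa using hsum
  | succ n ih =>
    intro c hdeg hsum b hb
    rw [Finset.sum_range_succ] at hsum
    have hrw : ∑ b ∈ Finset.range (n+1), c b * u ^ (n + 1 - b)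
        = u * ∑ b ∈ Finset.range (n+1), c b * u ^ (n - b) := by
      rw [Finset.mul_sum]
      apply Finset.sum_congr rfl
      intro i hi
      rw [Finset.mem_range] at hi
      have : n + 1 - i = (n - i) + 1 := by omega
      rw [this, pow_succ]
      ring
    rw [hrw] at hsum
    simp only [Nat.sub_self, pow_zero, mul_one] at hsum
    set T := ∑ b ∈ Finset.range (n+1), c b * u ^ (n - b) with hT
    have hcn : c (n+1) = -(u * T) := by linear_combination hsum
    have hT0 : T = 0 := by
      by_contra h
      have h1 : (c (n+1)).natDegree = u.natDegree + T.natDegree := by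
        rw [hcn, natDegree_neg, Polynomial.natDegree_mul hu h]
      have h2 := hdeg (n+1) (by omega) le_rfl
      omega
    have hc0 := ih c (fun b h1 h2 => hdeg b h1 (by omega)) (by rw [← hT, hT0])
    rcases Nat.lt_or_ge b (n+1) with h | h
    · exact hc0 b (by omega)
    · have : b = n + 1 := by omega
      rw [this, hcn, hT0, mul_zero, neg_zero]

open PowerSeries in
lemma genfun (F : Type*) [Field F] (k : ℕ) :
    ((1 - PowerSeries.X)^(k+1) : PowerSeries F) *
      PowerSeries.mk (fun i => (((i + k).choose k : ℕ) : F)) = 1 := by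
  have h1 := (invOneSubPow F (k+1)).inv_val
  rw [invOneSubPow_inv_eq_one_sub_pow, invOneSubPow_val_succ_eq_mk_add_choose] at h1
  convert h1 using 3 with n
  funext n
  rw [Nat.add_comm]

open MvPolynomial in
lemma coeffA (F : Type*) [Field F] (k : ℕ) :
    MvPolynomial.coeff (Finsupp.single 0 (k+1))
      ((1 - MvPolynomial.X 0 : MvPolynomial (Fin 2) F)^(k+1)) = (-1)^(k+1) := by
  have key : ∀ m : ℕ, ((-1 : MvPolynomial (Fin 2) F)) ^ (m+(k+1)) * 1 ^ m * X 0 ^ (k+1-m)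
        * (((k+1).choose m : ℕ) : MvPolynomial (Fin 2) F)
      = C ((-1 : F)^(m+(k+1)) * (((k+1).choose m : ℕ) : F)) * X 0^(k+1-m) := by
    intro m
    rw [← MvPolynomial.C_eq_coe_nat, map_mul, map_pow, map_neg, map_one]
    ring
  rw [sub_pow, MvPolynomial.coeff_sum]
  rw [Finset.sum_eq_single_of_mem 0 (Finset.mem_range.2 (by omega))]
  · rw [key, MvPolynomial.coeff_C_mul, Nat.sub_zero, MvPolynomial.coeff_X_pow, if_pos rfl]
    simp
  · intro m hm hm0
    have hne : ¬ (Finsupp.single (0 : Fin 2) (k+1-m) = Finsupp.single 0 (k+1)) := by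
      rw [Finsupp.single_eq_single_iff]
      rw [Finset.mem_range] at hm
      omega
    rw [key, MvPolynomial.coeff_C_mul, MvPolynomial.coeff_X_pow, if_neg hne, mul_zero]

open MvPolynomial in
lemma h0_totalDegree (F : Type*) [Field F] (k : ℕ) :
    ((1 - X 0)^(k+1) * X 1 - 1 : MvPolynomial (Fin 2) F).totalDegree = k + 2 := by
  set μ : Fin 2 →₀ ℕ := Finsupp.single 0 (k+1) + Finsupp.single 1 1 with hμ
  have hc : MvPolynomial.coeff μ ((1 - X 0)^(k+1) * X 1 - 1 : MvPolynomial (Fin 2) F)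
      = (-1)^(k+1) := by
    rw [MvPolynomial.coeff_sub, hμ, MvPolynomial.coeff_mul_X, coeffA]
    have : ¬ ((0 : Fin 2 →₀ ℕ) = Finsupp.single 0 (k+1) + Finsupp.single 1 1) := by
      intro h
      have := DFunLike.congr_fun h 1
      simp at this
    rw [MvPolynomial.coeff_one, if_neg this, sub_zero]
  have hne : ((-1 : F)^(k+1)) ≠ 0 := by
    apply pow_ne_zero
    exact neg_ne_zero.mpr one_ne_zero
  have hmem : μ ∈ ((1 - X 0)^(k+1) * X 1 - 1 : MvPolynomial (Fin 2) F).support := by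
    rw [MvPolynomial.mem_support_iff, hc]; exact hne
  have hge := MvPolynomial.le_totalDegree hmem
  have hsum : (μ.sum fun _ e => e) = k + 2 := by
    rw [hμ, Finsupp.sum_add_index (by simp) (by simp), Finsupp.sum_single_index rfl,
      Finsupp.sum_single_index rfl]
  have hle : ((1 - X 0)^(k+1) * X 1 - 1 : MvPolynomial (Fin 2) F).totalDegree ≤ k + 2 := by
    refine (totalDegree_sub _ _).trans ?_
    rw [totalDegree_one]
    simp only [Nat.max_le, Nat.zero_le, and_true]
    refine (totalDegree_mul _ _).trans ?_
    rw [totalDegree_X]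
    have h1 : ((1 - X 0 : MvPolynomial (Fin 2) F)).totalDegree ≤ 1 := by
      refine (totalDegree_sub _ _).trans ?_
      rw [totalDegree_one, totalDegree_X]
      omega
    have := (totalDegree_pow (1 - X 0 : MvPolynomial (Fin 2) F) (k+1))
    have h2 : ((1 - X 0 : MvPolynomial (Fin 2) F)^(k+1)).totalDegree ≤ k+1 := by
      refine this.trans ?_
      calc (k+1) * (1 - X 0 : MvPolynomial (Fin 2) F).totalDegree ≤ (k+1) * 1 :=
        Nat.mul_le_mul_left _ h1
      _ = k + 1 := by omega
    omega
  omega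

open MvPolynomial PowerSeries in
lemma lowerAux {F : Type*} [Field F] (k p : ℕ) (hkp : (k+1)*(k+2) < p)
    (G : PowerSeries F) (hG : (1 - PowerSeries.X)^(k+1) * G = 1)
    (h : MvPolynomial (Fin 2) F) (hd : h.totalDegree ≤ k+1)
    (hdvd : (PowerSeries.X : PowerSeries F)^p ∣ MvPolynomial.aeval ![PowerSeries.X, G] h) :
    h = 0 := by
  classical
  have hmsum : ∀ m : Fin 2 →₀ ℕ, (m.sum fun _ e => e) = m 0 + m 1 := by
    intro m
    rw [Finsupp.sum_fintype _ _ (fun _ => rfl), Fin.sum_univ_two]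
  have hdegm : ∀ m ∈ h.support, m 0 + m 1 ≤ k + 1 := by
    intro m hm
    have := MvPolynomial.le_totalDegree hm
    rw [hmsum] at this
    omega
  have hAs : MvPolynomial.aeval ![(PowerSeries.X : PowerSeries F), G] h
      = ∑ m ∈ h.support, PowerSeries.C (MvPolynomial.coeff m h)
          * (PowerSeries.X ^ (m 0) * G ^ (m 1)) := by
    conv_lhs => rw [h.as_sum]
    rw [map_sum]
    apply Finset.sum_congr rfl
    intro m hm
    rw [MvPolynomial.aeval_monomial]
    congr 1
    rw [Finsupp.prod_fintype _ _ (fun _ => pow_zero _), Fin.prod_univ_two]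
    simp
  set u : Polynomial F := (1 - Polynomial.X)^(k+1) with hu_def
  have hu_ne : u ≠ 0 := by
    apply pow_ne_zero
    intro hzero
    have hzero' : (Polynomial.X : Polynomial F) = 1 := by linear_combination -hzero
    have := congr_arg Polynomial.natDegree hzero'
    simp at this
  have hu_deg : u.natDegree = k + 1 := by
    rw [hu_def, Polynomial.natDegree_pow]
    have h1 : (1 - Polynomial.X : Polynomial F) = -(Polynomial.X - Polynomial.C 1) := by
      rw [map_one]; ring
    rw [h1, Polynomial.natDegree_neg, Polynomial.natDegree_X_sub_C, mul_one]
  set c : ℕ → Polynomial F := fun b =>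
    ∑ m ∈ h.support.filter (fun m => m 1 = b),
      Polynomial.C (MvPolynomial.coeff m h) * Polynomial.X ^ (m 0) with hc_def
  set P : Polynomial F := ∑ b ∈ Finset.range (k+2), c b * u ^ (k+1-b) with hP_def
  have hcoeP : (P : PowerSeries F) = ∑ b ∈ Finset.range (k+2),
      ∑ m ∈ h.support.filter (fun m => m 1 = b),
        ((Polynomial.C (MvPolynomial.coeff m h) * Polynomial.X ^ (m 0) : Polynomial F) :
          PowerSeries F) * ((u : Polynomial F) : PowerSeries F) ^ (k+1-b) := by
    rw [hP_def, ← Polynomial.coeToPowerSeries.ringHom_apply, map_sum]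
    apply Finset.sum_congr rfl
    intro b _
    rw [map_mul, map_pow, hc_def]
    simp only [Polynomial.coeToPowerSeries.ringHom_apply]
    rw [← Polynomial.coeToPowerSeries.ringHom_apply
      (φ := ∑ m ∈ h.support.filter (fun m => m 1 = b),
        Polynomial.C (MvPolynomial.coeff m h) * Polynomial.X ^ (m 0)), map_sum, Finset.sum_mul]
    simp only [Polynomial.coeToPowerSeries.ringHom_apply]
  have hP : (P : PowerSeries F)
      = (1 - PowerSeries.X)^((k+1)*(k+1)) * MvPolynomial.aeval ![PowerSeries.X, G] h := by
    rw [hAs, Finset.mul_sum]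
    rw [← Finset.sum_fiberwise_of_maps_to (g := fun m => m 1) (t := Finset.range (k+2))
      (fun m hm => by simp only [Finset.mem_range]; have := hdegm m hm; omega)]
    rw [hcoeP]
    apply Finset.sum_congr rfl
    intro b _
    apply Finset.sum_congr rfl
    intro m hm
    rw [Finset.mem_filter] at hm
    have hb : m 1 = b := hm.2
    have hble : m 1 ≤ k + 1 := by have := hdegm m hm.1; omega
    have hGpow : (1 - PowerSeries.X : PowerSeries F)^((k+1)*(k+1)) * G ^ (m 1)
        = (1 - PowerSeries.X)^((k+1)*(k+1-m 1)) := by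
      have hsplit : (k+1)*(k+1) = (k+1)*(k+1-m 1) + (k+1)*(m 1) := by
        rw [← Nat.mul_add]
        congr 1
        omega
      have hone : (1 - PowerSeries.X : PowerSeries F)^((k+1)*(m 1)) * G ^ (m 1) = 1 := by
        rw [pow_mul, ← mul_pow, hG, one_pow]
      rw [hsplit, pow_add, mul_assoc, hone, mul_one]
    calc ((Polynomial.C (MvPolynomial.coeff m h) * Polynomial.X ^ m 0 : Polynomial F) :
            PowerSeries F) * ((u : Polynomial F) : PowerSeries F) ^ (k+1-b)
        = PowerSeries.C (MvPolynomial.coeff m h) * (PowerSeries.X ^ (m 0)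
            * (1 - PowerSeries.X)^((k+1)*(k+1-m 1))) := by
          push_cast [hu_def]
          rw [hb, ← pow_mul]
          ring
      _ = (1 - PowerSeries.X)^((k+1)*(k+1)) * (PowerSeries.C (MvPolynomial.coeff m h)
            * (PowerSeries.X ^ m 0 * G ^ m 1)) := by
          rw [← hGpow]; ring
  have hPdeg : P.natDegree ≤ (k+1)*(k+2) := by
    rw [hP_def]
    apply Polynomial.natDegree_sum_le_of_forall_le
    intro b _
    refine (Polynomial.natDegree_mul_le).trans ?_
    have h1 : (c b).natDegree ≤ k + 1 := by
      rw [hc_def]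
      apply Polynomial.natDegree_sum_le_of_forall_le
      intro m hm
      rw [Finset.mem_filter] at hm
      refine (Polynomial.natDegree_C_mul_le _ _).trans ?_
      rw [Polynomial.natDegree_X_pow]
      have := hdegm m hm.1
      omega
    have h2 : (u ^ (k+1-b)).natDegree ≤ (k+1)*(k+1) := by
      rw [Polynomial.natDegree_pow, hu_deg]
      exact Nat.mul_le_mul_right _ (by omega)
    calc (c b).natDegree + (u ^ (k+1-b)).natDegree ≤ (k+1) + (k+1)*(k+1) := add_le_add h1 h2
      _ = (k+1)*(k+2) := by ring
  have hP0 : P = 0 := by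
    have hdvdP : (PowerSeries.X : PowerSeries F)^p ∣ (P : PowerSeries F) := by
      rw [hP]
      exact Dvd.dvd.mul_left hdvd _
    apply Polynomial.ext
    intro n
    rcases Nat.lt_or_ge n p with hn | hn
    · have := (PowerSeries.X_pow_dvd_iff.mp hdvdP) n hn
      rw [← Polynomial.coeff_coe, this, Polynomial.coeff_zero]
    · rw [Polynomial.coeff_eq_zero_of_natDegree_lt (by omega), Polynomial.coeff_zero]
  have hc0 : ∀ b ≤ k+1, c b = 0 := by
    apply auxA u hu_ne (k+1) c
    · intro b hb1 hb2
      rw [hu_deg]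
      have hle : (c b).natDegree ≤ k := by
        simp only [hc_def]
        apply Polynomial.natDegree_sum_le_of_forall_le
        intro m hm
        rw [Finset.mem_filter] at hm
        refine (Polynomial.natDegree_C_mul_le _ _).trans ?_
        rw [Polynomial.natDegree_X_pow]
        have := hdegm m hm.1
        omega
      omega
    · show (∑ b ∈ Finset.range (k+2), c b * u ^ (k+1-b)) = 0
      rw [← hP_def]
      exact hP0
  apply MvPolynomial.ext
  intro m
  rw [MvPolynomial.coeff_zero]
  by_cases hm : m ∈ h.support
  · have hb : m 1 ≤ k + 1 := by have := hdegm m hm; omega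
    have hcb := hc0 (m 1) hb
    have hcoeff : (c (m 1)).coeff (m 0) = MvPolynomial.coeff m h := by
      rw [hc_def]
      simp only
      rw [Polynomial.finset_sum_coeff]
      refine (Finset.sum_eq_single_of_mem
        (s := h.support.filter (fun m' => m' 1 = m 1))
        (f := fun m' => (Polynomial.C (MvPolynomial.coeff m' h) * Polynomial.X ^ (m' 0)).coeff (m 0))
        m (Finset.mem_filter.2 ⟨hm, rfl⟩) ?_).trans ?_
      case refine_2 =>
        simp [Polynomial.coeff_C_mul, Polynomial.coeff_X_pow]
      · intro m' hm' hne
        rw [Finset.mem_filter] at hm'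
        simp only [Polynomial.coeff_C_mul, Polynomial.coeff_X_pow]
        have hneq : ¬ (m 0 = m' 0) := by
          intro heq
          apply hne
          apply Finsupp.ext
          intro i
          fin_cases i
          · exact heq.symm
          · exact hm'.2
        rw [if_neg hneq, mul_zero]
    rw [← hcoeff, hcb, Polynomial.coeff_zero]
  · exact MvPolynomial.notMem_support_iff.mp hm


theorem expComplexityN_binomial_sequence_small_k (p k : ℕ) [Fact p.Prime]
    (hk1 : 1 ≤ k) (hk2 : k ≤ p - 1) (hkp : (k + 1) * (k + 2) < p) :
    expComplexityN (fun i => (((i + k).choose k : ℕ) : ZMod p)) p = k + 2 := by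
  have hp : p.Prime := Fact.out
  set s : ℕ → ZMod p := fun i => (((i + k).choose k : ℕ) : ZMod p) with hs
  have genid : ((1 - PowerSeries.X)^(k+1) : PowerSeries (ZMod p)) * PowerSeries.mk s = 1 :=
    genfun (ZMod p) k
  rw [expComplexityN, if_neg]
  · -- sInf computation
    have hmem : (k+2) ∈ {d | ∃ h : MvPolynomial (Fin 2) (ZMod p), h ≠ 0 ∧ h.totalDegree = d ∧
        (PowerSeries.X : PowerSeries (ZMod p)) ^ p ∣
          MvPolynomial.aeval ![(PowerSeries.X : PowerSeries (ZMod p)), PowerSeries.mk s] h} := by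
      refine ⟨(1 - MvPolynomial.X 0)^(k+1) * MvPolynomial.X 1 - 1, ?_, h0_totalDegree _ k, ?_⟩
      · intro heq
        have := h0_totalDegree (ZMod p) k
        rw [heq, MvPolynomial.totalDegree_zero] at this
        omega
      · have : MvPolynomial.aeval ![(PowerSeries.X : PowerSeries (ZMod p)), PowerSeries.mk s]
            ((1 - MvPolynomial.X 0 : MvPolynomial (Fin 2) (ZMod p))^(k+1)
              * MvPolynomial.X 1 - 1) = 0 := by
          rw [map_sub, map_mul, map_pow, map_sub, map_one, MvPolynomial.aeval_X,
            MvPolynomial.aeval_X]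
          simp only [Matrix.cons_val_zero, Matrix.cons_val_one, Matrix.head_cons]
          rw [genid, sub_self]
        rw [this]
        exact dvd_zero _
    refine le_antisymm (Nat.sInf_le hmem) (le_csInf ⟨_, hmem⟩ ?_)
    rintro d ⟨h, hne, htd, hdvd⟩
    by_contra hlt
    push_neg at hlt
    have hd : h.totalDegree ≤ k + 1 := by omega
    exact hne (lowerAux k p hkp (PowerSeries.mk s) genid h hd hdvd)
  · intro hall
    have h0 := hall 0 hp.pos
    have h1 : s 0 = 1 := by
      simp [hs, Nat.choose_self]
    rw [h1] at h0
    exact one_ne_zero h0
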